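/- The Reidemeister spectrum of the dicyclic group Dic₃ of order 12 (the dicyclic group with presentation ⟨a, b | a³ = b⁴ = 1, b⁻¹ a b = a²⟩, i.e. the quaternion-type group QuaternionGroup 3 in Mathlib) is {4, 6}. -/

import Mathlib

open QuaternionGroup

/-- Two elements `x, y` are `φ`-conjugate if `x = g * y * (φ g)⁻¹` for some `g`. -/
def twistedConj {G : Type*} [Group G] (φ : G ≃* G) (x y : G) : Prop :=
  ∃ g : G, x = g * y * (φ g)⁻¹

/-- The Reidemeister number `R(φ)`: the number of `φ`-conjugacy classes. -/
noncomputable def reidemeisterNumber {G : Type*} [Group G] (φ : G ≃* G) : ℕ :=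
  Nat.card (Quot (twistedConj φ))

/-- The Reidemeister spectrum `Spec_R(G) = {R(φ) : φ ∈ Aut(G)}`. -/
def reidemeisterSpectrum (G : Type*) [Group G] : Set ℕ :=
  { k | ∃ φ : G ≃* G, reidemeisterNumber φ = k }

theorem tc_equiv {G : Type*} [Group G] (φ : G ≃* G) : Equivalence (twistedConj φ) := by
  constructor
  · intro x; exact ⟨1, by simp⟩
  · rintro x y ⟨g, rfl⟩
    exact ⟨g⁻¹, by simp [mul_assoc]⟩
  · rintro x y z ⟨g, rfl⟩ ⟨k, rfl⟩
    exact ⟨g * k, by simp [mul_assoc]⟩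

abbrev tcSetoid {G : Type*} [Group G] (φ : G ≃* G) : Setoid G := ⟨twistedConj φ, tc_equiv φ⟩

instance tcDec {G : Type*} [Group G] [Fintype G] [DecidableEq G] (φ : G ≃* G) :
    DecidableRel (twistedConj φ) := fun _ _ => Fintype.decidableExistsFintype

instance tcDec' {G : Type*} [Group G] [Fintype G] [DecidableEq G] (φ : G ≃* G) :
    DecidableRel (α := G) (@HasEquiv.Equiv G (@instHasEquivOfSetoid G (tcSetoid φ))) := tcDec φ

lemma rn_eq {G : Type*} [Group G] [Fintype G] [DecidableEq G] (φ : G ≃* G) :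
    reidemeisterNumber φ = Fintype.card (Quotient (tcSetoid φ)) := by
  have h : reidemeisterNumber φ = Nat.card (Quotient (tcSetoid φ)) := rfl
  rw [h, Nat.card_eq_fintype_card]

def psiFun (s t : ZMod 6) : QuaternionGroup 3 → QuaternionGroup 3
  | .a i => .a (s * i)
  | .xa i => .xa (s * i + t)

@[simp] lemma psiFun_a (s t i : ZMod 6) : psiFun s t (a i) = a (s * i) := rfl
@[simp] lemma psiFun_xa (s t i : ZMod 6) : psiFun s t (xa i) = xa (s * i + t) := rfl

def psi (s t : ZMod 6) (h1 : s * s = 1) (h3 : s * 3 = 3) :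
    QuaternionGroup 3 ≃* QuaternionGroup 3 where
  toFun := psiFun s t
  invFun := psiFun s (-(s * t))
  left_inv x := by
    rcases x with i | i <;> simp only [psiFun_a, psiFun_xa]
    · congr 1; linear_combination i * h1
    · congr 1; linear_combination i * h1
  right_inv x := by
    rcases x with i | i <;> simp only [psiFun_a, psiFun_xa]
    · congr 1; linear_combination i * h1
    · congr 1; linear_combination (i - t) * h1
  map_mul' x y := by
    rcases x with i | i <;> rcases y with j | j <;>
      simp only [a_mul_a, a_mul_xa, xa_mul_a, xa_mul_xa, psiFun_a, psiFun_xa, Nat.cast_ofNat]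
    · congr 1; ring
    · congr 1; ring
    · congr 1; ring
    · congr 1; linear_combination h3

lemma a_pow (c : ZMod 6) (k : ℕ) : (a c : QuaternionGroup 3) ^ k = a (c * (k : ZMod 6)) := by
  induction k with
  | zero => simp [one_def, -a_zero]
  | succ k ih => rw [pow_succ, ih, a_mul_a]; congr 1; push_cast; ring

lemma classify (φ : QuaternionGroup 3 ≃* QuaternionGroup 3) :
    ∃ (s t : ZMod 6) (h1 : s * s = 1) (h3 : s * 3 = 3), φ = psi s t h1 h3 := by
  -- the image of `a 1` has order 6
  have h2 : φ (a 1) ^ 2 ≠ 1 := by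
    rw [← map_pow]
    intro h
    have := φ.injective (h.trans (map_one φ).symm)
    exact absurd this (by decide)
  have h3' : φ (a 1) ^ 3 ≠ 1 := by
    rw [← map_pow]
    intro h
    have := φ.injective (h.trans (map_one φ).symm)
    exact absurd this (by decide)
  have h4' : φ (a 1) ^ 4 ≠ 1 := by
    rw [← map_pow]
    intro h
    have := φ.injective (h.trans (map_one φ).symm)
    exact absurd this (by decide)
  have key : ∀ x : QuaternionGroup 3, x ^ 2 ≠ 1 → x ^ 3 ≠ 1 → x ^ 4 ≠ 1 →
      x = a 1 ∨ x = a 5 := by decide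
  have hu : φ (a 1) = a 1 ∨ φ (a 1) = a 5 := key _ h2 h3' h4'
  obtain ⟨s, hs, hu⟩ : ∃ s : ZMod 6, (s = 1 ∨ s = 5) ∧ φ (a 1) = a s := by
    rcases hu with h | h
    exacts [⟨1, Or.inl rfl, h⟩, ⟨5, Or.inr rfl, h⟩]
  have h1 : s * s = 1 := by rcases hs with rfl | rfl <;> decide
  have h3 : s * 3 = 3 := by rcases hs with rfl | rfl <;> decide
  -- values on the `a` part
  have hA : ∀ i : ZMod 6, φ (a i) = a (s * i) := by
    have keyA : ∀ k : ℕ, φ (a (k : ZMod 6)) = a (s * (k : ZMod 6)) := by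
      intro k
      rw [← a_one_pow, map_pow, hu, a_pow]
    intro i
    have := keyA i.val
    simpa [ZMod.natCast_val, ZMod.cast_id] using this
  -- the image of `xa 0`
  have hv2 : φ (xa 0) ^ 2 = a 3 := by
    rw [← map_pow]
    have e : (xa 0 : QuaternionGroup 3) ^ 2 = a 3 := by decide
    rw [e]
    have := hA 3
    rw [this, h3]
  have keyX : ∀ x : QuaternionGroup 3, x ^ 2 = a 3 → ∃ j : ZMod 6, x = xa j := by decide
  obtain ⟨t, ht⟩ := keyX _ hv2
  have hX : ∀ i : ZMod 6, φ (xa i) = xa (s * i + t) := by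
    intro i
    have e : (a (-i) : QuaternionGroup 3) * xa 0 = xa i := by
      rw [a_mul_xa]; congr 1; ring
    rw [← e, map_mul, hA, ht, a_mul_xa]
    congr 1; ring
  refine ⟨s, t, h1, h3, MulEquiv.ext fun x => ?_⟩
  rcases x with i | i
  · rw [hA]; rfl
  · rw [hX]; rfl

lemma rn_psi (s t : ZMod 6) (h1 : s * s = 1) (h3 : s * 3 = 3) :
    reidemeisterNumber (psi s t h1 h3) = 4 ∨ reidemeisterNumber (psi s t h1 h3) = 6 := by
  rw [rn_eq]
  have hs : s = 1 ∨ s = 5 := by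
    have : ∀ u : ZMod 6, u * u = 1 → u = 1 ∨ u = 5 := by decide
    exact this s h1
  rcases hs with rfl | rfl <;> revert t
  · exact (by decide : ∀ t : ZMod 6,
      Fintype.card (Quotient (tcSetoid (psi 1 t rfl rfl))) = 4 ∨
      Fintype.card (Quotient (tcSetoid (psi 1 t rfl rfl))) = 6)
  · exact (by decide : ∀ t : ZMod 6,
      Fintype.card (Quotient (tcSetoid (psi 5 t rfl rfl))) = 4 ∨
      Fintype.card (Quotient (tcSetoid (psi 5 t rfl rfl))) = 6)

/-- **Example 1.2.** The Reidemeister spectrum of the dicyclic group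
`Dic₃ = ZM(3,4,2)` of order 12 (`QuaternionGroup 3` in Mathlib) is `{4, 6}`. -/
theorem reidemeisterSpectrum_dic3 :
    reidemeisterSpectrum (QuaternionGroup 3) = {4, 6} := by
  ext k
  simp only [reidemeisterSpectrum, Set.mem_setOf_eq, Set.mem_insert_iff,
    Set.mem_singleton_iff]
  constructor
  · rintro ⟨φ, rfl⟩
    obtain ⟨s, t, h1, h3, rfl⟩ := classify φ
    exact rn_psi s t h1 h3
  · rintro (rfl | rfl)
    · exact ⟨psi 1 1 (by decide) (by decide), by rw [rn_eq]; decide⟩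
    · exact ⟨psi 1 0 (by decide) (by decide), by rw [rn_eq]; decide⟩
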